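/- Let $q$ be a real with $0 < q < 1$ and let $k$ be a positive integer. If $p_j = c\,q^j$ (geometric frequencies, $c>0$), then $\lim_{t\to\infty}\sum_j (e^{-tp_j} - e^{-2tp_j})$ exists and is finite if and only if $q = 2^{-1/k}$ for some positive integer $k$, in which case the limit equals $k$. -/

import Mathlib

open Real Filter MeasureTheory Set

noncomputable def psi (x : ℝ) : ℝ := Real.exp (-x) - Real.exp (-(2*x))

lemma psi_nonneg {x : ℝ} (hx : 0 ≤ x) : 0 ≤ psi x := by
  have : Real.exp (-(2*x)) ≤ Real.exp (-x) := Real.exp_le_exp.2 (by linarith)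
  simpa [psi] using this

lemma psi_le_exp (x : ℝ) : psi x ≤ Real.exp (-x) := by
  have := (Real.exp_pos (-(2*x))).le; simp only [psi]; linarith

lemma psi_le_self {x : ℝ} (hx : 0 ≤ x) : psi x ≤ x := by
  have h1 : Real.exp (-(2*x)) = Real.exp (-x) * Real.exp (-x) := by
    rw [← Real.exp_add]; ring_nf
  have h2 : Real.exp (-x) ≤ 1 := Real.exp_le_one_iff.mpr (by linarith)
  have h3 : 1 - x ≤ Real.exp (-x) := by linarith [Real.add_one_le_exp (-x)]
  have h4 := (Real.exp_pos (-x)).le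
  simp only [psi, h1]; nlinarith

lemma continuous_psi : Continuous psi := by
  unfold psi; fun_prop

lemma psi_le_mul {x : ℝ} (hx : 0 ≤ x) : psi x ≤ x * Real.exp (-x) := by
  have h1 : Real.exp (-(2*x)) = Real.exp (-x) * Real.exp (-x) := by
    rw [← Real.exp_add]; ring_nf
  have h3 : 1 - x ≤ Real.exp (-x) := by linarith [Real.add_one_le_exp (-x)]
  have h4 := (Real.exp_pos (-x)).le
  simp only [psi, h1]; nlinarith

lemma psi_rpow_bound {x σ : ℝ} (hx : 0 < x) (h0 : 0 ≤ σ) (h1 : σ ≤ 1) :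
    psi x * x ^ (σ - 1) ≤ 2 * Real.exp (-x) := by
  rcases le_total x 1 with hx1 | hx1
  · have hb : x ^ (σ - 1) ≤ x ^ (-1 : ℝ) :=
      Real.rpow_le_rpow_of_exponent_ge hx hx1 (by linarith)
    have hψ : psi x ≤ x * Real.exp (-x) := psi_le_mul hx.le
    calc psi x * x^(σ-1) ≤ (x * Real.exp (-x)) * x^(-1:ℝ) := by
          apply mul_le_mul hψ hb (Real.rpow_nonneg hx.le _) (by positivity)
    _ = Real.exp (-x) := by rw [Real.rpow_neg_one]; field_simp
    _ ≤ 2 * Real.exp (-x) := by linarith [Real.exp_pos (-x)]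
  · have hb : x ^ (σ - 1) ≤ 1 := Real.rpow_le_one_of_one_le_of_nonpos hx1 (by linarith)
    have hψ : psi x ≤ Real.exp (-x) := psi_le_exp x
    calc psi x * x^(σ-1) ≤ Real.exp (-x) * 1 :=
          mul_le_mul hψ hb (Real.rpow_nonneg hx.le _) (Real.exp_pos _).le
    _ ≤ 2 * Real.exp (-x) := by linarith [Real.exp_pos (-x)]

open MeasureTheory in
lemma expInt {a : ℂ} (ha : 0 < a.re) {r : ℝ} (hr : 1 ≤ r) :
    IntegrableOn (fun x : ℝ => (x:ℂ) ^ (a - 1) * Complex.exp (-((r:ℂ) * (x:ℂ)))) (Set.Ioi 0) := by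
  have hmeas : AEStronglyMeasurable (fun x : ℝ => (x:ℂ) ^ (a - 1) * Complex.exp (-((r:ℂ) * (x:ℂ))))
      ((volume : Measure ℝ).restrict (Set.Ioi 0)) := by
    refine ContinuousOn.aestronglyMeasurable ?_ measurableSet_Ioi
    refine ContinuousOn.mul ?_ (Complex.continuous_exp.comp (by continuity)).continuousOn
    intro x hx
    exact ((continuousAt_cpow_const (Complex.ofReal_mem_slitPlane.2 hx)).comp
      Complex.continuous_ofReal.continuousAt).continuousWithinAt
  refine Integrable.mono' (Real.GammaIntegral_convergent ha) hmeas ?_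
  rw [ae_restrict_iff' measurableSet_Ioi]
  refine Filter.Eventually.of_forall fun x hx => ?_
  rw [Set.mem_Ioi] at hx
  rw [norm_mul,
    Complex.norm_cpow_eq_rpow_re_of_pos hx, Complex.norm_exp]
  have h1 : (a - 1).re = a.re - 1 := by simp
  have h2 : (-((r:ℂ) * (x:ℂ))).re = -(r * x) := by
    simp [Complex.mul_re]
  rw [h1, h2]
  have h3 : Real.exp (-(r * x)) ≤ Real.exp (-x) := by
    apply Real.exp_le_exp.2
    nlinarith
  calc x ^ (a.re - 1) * Real.exp (-(r*x)) ≤ x ^ (a.re - 1) * Real.exp (-x) := by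
        apply mul_le_mul_of_nonneg_left h3 (Real.rpow_nonneg hx.le _)
  _ = Real.exp (-x) * x ^ (a.re - 1) := by ring


lemma part2 (c q : ℝ) (hc : 0 < c) (hq0 : 0 < q) (hq1 : q < 1)
    (p : ℕ → ℝ) (hp : ∀ j : ℕ, p j = c * q ^ (j + 1))
    (V : ℝ → ℝ) (hV : ∀ t : ℝ, V t = ∑' j : ℕ, psi (t * p j))
    (k : ℕ) (hk : 0 < k) (hqk : q = (2 : ℝ) ^ (-(1 : ℝ) / (k : ℝ))) :
    Tendsto V atTop (nhds (k : ℝ)) := by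
  have hkR : ((k : ℝ)) ≠ 0 := Nat.cast_ne_zero.mpr hk.ne'
  have hqk2 : q ^ k = 2⁻¹ := by
    rw [hqk, ← Real.rpow_natCast ((2:ℝ) ^ (-(1:ℝ)/(k:ℝ))) k, ← Real.rpow_mul (by norm_num),
      div_mul_cancel₀ _ hkR]
    simp [Real.rpow_neg_one]
  have hqne : q ≠ 0 := hq0.ne'
  have hqzk : q ^ (-(k:ℤ)) = 2 := by
    rw [zpow_neg, zpow_natCast, hqk2]; simp
  -- the shifted exponential function
  set a : ℝ → ℤ → ℝ := fun t m => Real.exp (-(t * (c * q ^ m))) with ha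
  have hterm : ∀ (t : ℝ) (j : ℕ), psi (t * p j) = a t ((j:ℤ)+1) - a t ((j:ℤ)+1-k) := by
    intro t j
    have h1 : t * p j = t * (c * q ^ ((j:ℤ)+1)) := by
      rw [hp]; norm_cast
    have h2 : 2 * (t * p j) = t * (c * q ^ ((j:ℤ)+1-(k:ℤ))) := by
      have e1 : q ^ ((j:ℤ)+1-(k:ℤ)) = q ^ (j+1) * 2 := by
        rw [sub_eq_add_neg, zpow_add₀ hqne, hqzk]
        norm_cast
      rw [hp, e1]; ring
    simp only [psi]
    rw [h2, h1]
  -- telescoping identity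
  have key : ∀ (t : ℝ) (n : ℕ), ∑ j ∈ Finset.range n, (a t ((j:ℤ)+1) - a t ((j:ℤ)+1-k)) =
      ∑ i ∈ Finset.range k, (a t ((n:ℤ)-(i:ℤ)) - a t (-(i:ℤ))) := by
    intro t n
    induction n with
    | zero => simp
    | succ n ih =>
      rw [Finset.sum_range_succ, ih]
      have hs := Finset.sum_range_sub' (fun i => a t ((n:ℤ)+1-(i:ℤ))) k
      have hs' : ∑ i ∈ Finset.range k, (a t ((n:ℤ)+1-(i:ℤ)) - a t ((n:ℤ)-(i:ℤ)))
          = a t ((n:ℤ)+1) - a t ((n:ℤ)+1-(k:ℤ)) := by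
        push_cast at hs
        rw [sub_zero] at hs
        rw [← hs]
        refine Finset.sum_congr rfl fun i _ => ?_
        congr 2
        push_cast
        ring
      simp only [Finset.sum_sub_distrib] at hs' ⊢
      push_cast
      push_cast at hs'
      linarith
  -- limit of the k-window
  have hwin : ∀ t : ℝ, Tendsto (fun n : ℕ => ∑ i ∈ Finset.range k, a t ((n:ℤ)-(i:ℤ)))
      atTop (nhds (k : ℝ)) := by
    intro t
    have hone : ((k:ℝ)) = ∑ _i ∈ Finset.range k, (1:ℝ) := by simp
    rw [hone]
    refine tendsto_finset_sum _ fun i _ => ?_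
    have h0 : Tendsto (fun n : ℕ => q ^ n) atTop (nhds 0) :=
      tendsto_pow_atTop_nhds_zero_of_lt_one hq0.le hq1
    have h1 : Tendsto (fun n : ℕ => -(t * (c * (q ^ n * q ^ (-(i:ℤ)))))) atTop (nhds 0) := by
      have := (((h0.mul_const (q ^ (-(i:ℤ)))).const_mul c).const_mul t).neg
      simpa using this
    have h2 := (Real.continuous_exp.tendsto 0).comp h1
    rw [Real.exp_zero] at h2
    refine h2.congr fun n => ?_
    simp only [Function.comp, ha]
    congr 2
    rw [sub_eq_add_neg, zpow_add₀ hqne, zpow_natCast]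
  -- the value of V for t ≥ 0
  have hhs : ∀ t : ℝ, 0 ≤ t → HasSum (fun j : ℕ => psi (t * p j))
      ((k : ℝ) - ∑ i ∈ Finset.range k, a t (-(i:ℤ))) := by
    intro t ht
    have hnn : ∀ j : ℕ, 0 ≤ psi (t * p j) := by
      intro j
      apply psi_nonneg
      have : 0 ≤ p j := by rw [hp]; positivity
      positivity
    rw [hasSum_iff_tendsto_nat_of_nonneg hnn]
    have : (fun n : ℕ => ∑ j ∈ Finset.range n, psi (t * p j))
        = fun n : ℕ => ∑ i ∈ Finset.range k, a t ((n:ℤ)-(i:ℤ)) -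
            ∑ i ∈ Finset.range k, a t (-(i:ℤ)) := by
      funext n
      rw [show ∑ j ∈ Finset.range n, psi (t * p j)
          = ∑ j ∈ Finset.range n, (a t ((j:ℤ)+1) - a t ((j:ℤ)+1-k)) from
          Finset.sum_congr rfl fun j _ => hterm t j, key t n, Finset.sum_sub_distrib]
    rw [this]
    exact (hwin t).sub tendsto_const_nhds
  -- conclude
  have hfinal : Tendsto (fun t : ℝ => (k : ℝ) - ∑ i ∈ Finset.range k, a t (-(i:ℤ)))
      atTop (nhds ((k : ℝ) - 0)) := by
    refine tendsto_const_nhds.sub ?_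
    have hzero : (0:ℝ) = ∑ _i ∈ Finset.range k, (0:ℝ) := by simp
    rw [hzero]
    refine tendsto_finset_sum _ fun i _ => ?_
    have hr : 0 < c * q ^ (-(i:ℤ)) := by positivity
    have h1 : Tendsto (fun t : ℝ => -(t * (c * q ^ (-(i:ℤ))))) atTop atBot :=
      tendsto_neg_atTop_atBot.comp (tendsto_id.atTop_mul_const hr)
    exact Real.tendsto_exp_atBot.comp h1
  rw [show ((k:ℝ)) = (k:ℝ) - 0 by ring]
  refine Tendsto.congr' ?_ hfinal
  filter_upwards [eventually_ge_atTop (0:ℝ)] with t ht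
  rw [hV t, (hhs t ht).tsum_eq]

set_option maxHeartbeats 1000000 in
lemma lemA (c L : ℝ) (hc : 0 < c) (hL : 0 < L)
    (p : ℕ → ℝ) (hp : ∀ j : ℕ, p j = c * (Real.exp (-L)) ^ (j + 1))
    (V : ℝ → ℝ) (hV : ∀ t : ℝ, V t = ∑' j : ℕ, psi (t * p j))
    (v : ℝ) (hv : Tendsto V atTop (nhds v)) (u : ℝ) :
    HasSum (fun m : ℤ => psi (c * Real.exp (u - m * L))) v := by
  set q : ℝ := Real.exp (-L) with hq
  have hq0 : 0 < q := Real.exp_pos _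
  have hq1 : q < 1 := by
    rw [hq, Real.exp_lt_one_iff]; linarith
  set F : ℤ → ℝ := fun m => psi (c * Real.exp (u - m * L)) with hF
  have hFnn : ∀ m, 0 ≤ F m := fun m => psi_nonneg (by positivity)
  -- the function values along the subsequence
  have hfun : ∀ n : ℕ, (fun j : ℕ => psi (Real.exp (u + n * L) * p j))
      = fun j : ℕ => F ((j:ℤ) + 1 - n) := by
    intro n
    funext j
    simp only [hF]
    congr 1
    rw [hp]
    have : q ^ (j+1) = Real.exp (((j:ℝ)+1) * (-L)) := by
      rw [hq, ← Real.exp_nat_mul]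
      push_cast
      ring_nf
    rw [this, ← mul_assoc, mul_comm (Real.exp (u + n*L)) c, mul_assoc, ← Real.exp_add]
    congr 1
    push_cast
    ring
  have hsumb : ∀ n : ℕ, Summable (fun j : ℕ => F ((j:ℤ) + 1 - n)) := by
    intro n
    rw [← hfun n]
    set t : ℝ := Real.exp (u + n * L) with ht
    have ht0 : 0 < t := Real.exp_pos _
    refine Summable.of_nonneg_of_le (fun j => psi_nonneg (by rw [hp]; positivity))
      (fun j => ?_) (((summable_geometric_of_lt_one hq0.le hq1).mul_left (t * c * q)))
    calc psi (t * p j) ≤ t * p j := psi_le_self (by rw [hp]; positivity)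
    _ = t * c * q * q ^ j := by rw [hp, pow_succ]; ring
  set b : ℕ → ℝ := fun n => ∑' j : ℕ, F ((j:ℤ) + 1 - n) with hb
  have hbV : ∀ n : ℕ, V (Real.exp (u + n * L)) = b n := by
    intro n
    rw [hV, hfun n]
  have hmono : Monotone b := by
    apply monotone_nat_of_le_succ
    intro n
    have hstep : b (n+1) = F (-(n:ℤ)) + b n := by
      simp only [hb]
      rw [Summable.tsum_eq_zero_add (hsumb (n+1))]
      congr 1
      · congr 1; push_cast; ring
      · apply tsum_congr; intro j; congr 1; push_cast; ring
    have := hFnn (-(n:ℤ))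
    linarith [hstep]
  have hbtend : Tendsto b atTop (nhds v) := by
    have h1 : Tendsto (fun n : ℕ => u + n * L) atTop atTop := by
      apply tendsto_atTop_add_const_left
      exact tendsto_natCast_atTop_atTop.atTop_mul_const hL
    have h2 : Tendsto (fun n : ℕ => Real.exp (u + n * L)) atTop atTop :=
      Real.tendsto_exp_atTop.comp h1
    have := hv.comp h2
    refine this.congr fun n => hbV n
  have hble : ∀ n, b n ≤ v := hmono.ge_of_tendsto hbtend
  apply hasSum_of_isLUB_of_nonneg v hFnn
  constructor
  · -- upper bound
    rintro x ⟨T, rfl⟩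
    set n : ℕ := T.sup (fun m => (1 - m).toNat) with hn
    have hTn : ∀ m ∈ T, (1:ℤ) - n ≤ m := by
      intro m hm
      have h1 : (1 - m).toNat ≤ n := Finset.le_sup (f := fun m => (1 - m).toNat) hm
      have h2 : ((1 - m).toNat : ℤ) ≤ n := by exact_mod_cast h1
      have h3 := Int.self_le_toNat (1 - m)
      omega
    set g : ℤ → ℕ := fun m => (m - (1 - (n:ℤ))).toNat with hg
    have he : ∀ m ∈ T, ((g m : ℤ) + 1 - n) = m := by
      intro m hm
      have := hTn m hm
      simp only [hg]
      rw [Int.toNat_of_nonneg (by omega)]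
      ring
    have hinj : ∀ x ∈ T, ∀ y ∈ T, g x = g y → x = y := by
      intro x hx y hy hxy
      have h1 := he x hx
      have h2 := he y hy
      rw [← h1, ← h2, hxy]
    calc ∑ m ∈ T, F m = ∑ j ∈ T.image g, F ((j:ℤ) + 1 - n) := by
          rw [Finset.sum_image hinj]
          exact (Finset.sum_congr rfl fun m hm => by rw [he m hm]).symm
    _ ≤ ∑' j : ℕ, F ((j:ℤ) + 1 - n) := Summable.sum_le_tsum _ (fun _ _ => hFnn _) (hsumb n)
    _ ≤ v := hble n
  · -- least upper bound
    intro x hx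
    refine le_of_tendsto hbtend (Eventually.of_forall fun n => ?_)
    simp only [hb]
    apply Summable.tsum_le_of_sum_le (hsumb n)
    intro J
    have hinj : ∀ a ∈ J, ∀ b ∈ J, ((a:ℤ) + 1 - n) = ((b:ℤ) + 1 - n) → a = b := by
      intro a _ b _ h; omega
    calc ∑ j ∈ J, F ((j:ℤ) + 1 - n)
        = ∑ m ∈ J.image (fun j : ℕ => (j:ℤ) + 1 - n), F m := (Finset.sum_image hinj).symm
    _ ≤ x := hx ⟨J.image (fun j : ℕ => (j:ℤ) + 1 - n), rfl⟩

set_option maxHeartbeats 1000000 in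
lemma lemB (c L v : ℝ) (hc : 0 < c) (hL : 0 < L)
    (hG : ∀ u : ℝ, HasSum (fun m : ℤ => psi (c * Real.exp (u - m * L))) v) :
    ∫ u : ℝ, (psi (c * Real.exp u) : ℂ) * Complex.exp ((-(2*π/L*u) : ℝ) * Complex.I) = 0 := by
  set θ : ℝ := 2*π/L with hθdef
  have hθ : 0 < θ := by positivity
  have hθL : θ * L = 2*π := div_mul_cancel₀ _ hL.ne'
  set h : ℝ → ℂ := fun u => (psi (c * Real.exp u) : ℂ) * Complex.exp ((-(θ*u) : ℝ) * Complex.I)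
    with hh
  have hG' : ∀ u : ℝ, HasSum (fun m : ℤ => psi (c * Real.exp (u + m * L))) v := by
    intro u
    have := ((Equiv.neg ℤ).hasSum_iff
      (f := fun m : ℤ => psi (c * Real.exp (u - m * L))) (a := v)).mpr (hG u)
    refine this.congr_fun fun m => ?_
    simp [Equiv.neg, sub_neg_eq_add]
  -- integrability of the envelope
  have hcont0 : Continuous (fun u : ℝ => psi (c * Real.exp u)) :=
    continuous_psi.comp (continuous_const.mul Real.continuous_exp)
  have hψint : Integrable (fun u : ℝ => psi (c * Real.exp u)) := by
    rw [← integrableOn_univ, ← Set.Iic_union_Ioi (a := (0:ℝ)), integrableOn_union]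
    constructor
    · refine Integrable.mono' ((integrableOn_exp_Iic 0).const_mul c) 
        (hcont0.aestronglyMeasurable.restrict) ?_
      filter_upwards with u
      rw [Real.norm_eq_abs, abs_of_nonneg (psi_nonneg (by positivity))]
      calc psi (c * Real.exp u) ≤ c * Real.exp u := psi_le_self (by positivity)
      _ = c * Real.exp u := rfl
    · refine Integrable.mono' ((exp_neg_integrableOn_Ioi 0 hc)) 
        (hcont0.aestronglyMeasurable.restrict) ?_
      filter_upwards with u
      rw [Real.norm_eq_abs, abs_of_nonneg (psi_nonneg (by positivity))]
      calc psi (c * Real.exp u) ≤ Real.exp (-(c * Real.exp u)) := psi_le_exp _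
      _ ≤ Real.exp (-c * u) := by
          apply Real.exp_le_exp.2
          have : u ≤ Real.exp u := by linarith [Real.add_one_le_exp u]
          nlinarith
  have hcont : Continuous h := by
    apply Continuous.mul
    · exact Complex.continuous_ofReal.comp hcont0
    · exact Complex.continuous_exp.comp (by continuity)
  have hinth : Integrable h := by
    refine Integrable.mono' hψint hcont.aestronglyMeasurable ?_
    filter_upwards with u
    simp only [hh]
    rw [norm_mul, Complex.norm_exp_ofReal_mul_I,
      mul_one, Complex.norm_real, Real.norm_eq_abs, abs_of_nonneg (psi_nonneg (by positivity))]
  -- tiling of ℝ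
  set s : ℤ → Set ℝ := fun m => Ioc (0 + m • L) (0 + (m+1) • L) with hs
  have hU : ⋃ m : ℤ, s m = univ := iUnion_Ioc_add_zsmul hL 0
  have hsplit : (∫ u : ℝ, h u) = ∑' m : ℤ, ∫ u in s m, h u := by
    rw [← setIntegral_univ (f := h), ← hU]
    exact integral_iUnion (fun m => measurableSet_Ioc)
      (pairwise_disjoint_Ioc_add_zsmul (0:ℝ) L) (hU ▸ hinth.integrableOn)
  have hexp1 : ∀ m : ℤ, Complex.exp ((-(θ * ((m:ℝ)*L)) : ℝ) * Complex.I) = 1 := by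
    intro m
    have e : (-(θ * ((m:ℝ)*L)) : ℝ) = ((-m : ℤ) : ℝ) * (2*π) := by
      push_cast
      linear_combination (-(m:ℝ)) * hθL
    rw [e]
    rw [← Complex.exp_int_mul_two_pi_mul_I (-m)]
    congr 1
    push_cast
    ring
  set fm : ℤ → ℝ → ℂ := fun m u => (psi (c * Real.exp (u + m * L)) : ℂ) *
      Complex.exp ((-(θ*u) : ℝ) * Complex.I) with hfm
  have htrans : ∀ m : ℤ, (∫ u in s m, h u) = ∫ u in Ioc 0 L, fm m u := by
    intro m
    have h1 : s m = Ioc ((m:ℝ)*L) ((m:ℝ)*L + L) := by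
      simp only [hs, zsmul_eq_mul, zero_add]
      congr 1
      push_cast; ring
    have hle1 : (m:ℝ)*L ≤ (m:ℝ)*L + L := by linarith
    rw [h1, ← intervalIntegral.integral_of_le hle1, ← intervalIntegral.integral_of_le hL.le]
    have h2 := intervalIntegral.integral_comp_add_right (a := 0) (b := L) h ((m:ℝ)*L)
    rw [zero_add, show L + (m:ℝ)*L = (m:ℝ)*L + L by ring] at h2
    rw [← h2]
    apply intervalIntegral.integral_congr
    intro u _
    simp only [hh, hfm]
    have e2 : ((-(θ*(u + (m:ℝ)*L)) : ℝ) : ℂ) * Complex.I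
        = ((-(θ*u) : ℝ) : ℂ) * Complex.I + ((-(θ*((m:ℝ)*L)) : ℝ):ℂ) * Complex.I := by
      push_cast; ring
    rw [e2, Complex.exp_add, hexp1 m, mul_one]
  have hmeas_fm : ∀ m : ℤ, AEStronglyMeasurable (fm m) (volume.restrict (Ioc 0 L)) := by
    intro m
    apply Continuous.aestronglyMeasurable
    apply Continuous.mul
    · exact Complex.continuous_ofReal.comp (continuous_psi.comp (by continuity))
    · exact Complex.continuous_exp.comp (by continuity)
  have hsum_v : ∀ u : ℝ, Summable (fun m : ℤ => psi (c * Real.exp (u + m * L))) :=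
    fun u => (hG' u).summable
  have hnorm_fm : ∀ (m : ℤ) (u : ℝ), ‖fm m u‖ = psi (c * Real.exp (u + m * L)) := by
    intro m u
    simp only [hfm]
    rw [norm_mul, Complex.norm_exp_ofReal_mul_I,
      mul_one, Complex.norm_real, Real.norm_eq_abs, abs_of_nonneg (psi_nonneg (by positivity))]
  have hlint : ∑' m : ℤ, ∫⁻ u in Ioc 0 L, ‖fm m u‖₊ ≠ ⊤ := by
    have heq : ∀ m : ℤ, (fun u => (‖fm m u‖₊ : ENNReal))
        = fun u => ENNReal.ofReal (psi (c * Real.exp (u + m * L))) := by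
      intro m; funext u
      rw [← hnorm_fm m u]; exact (ofReal_norm _).symm
    calc ∑' m : ℤ, ∫⁻ u in Ioc 0 L, ‖fm m u‖₊
        = ∑' m : ℤ, ∫⁻ u in Ioc 0 L, ENNReal.ofReal (psi (c * Real.exp (u + m * L))) := by
          refine tsum_congr fun m => ?_
          rw [show (fun u => ((‖fm m u‖₊ : ENNReal))) = _ from heq m]
    _ = ∫⁻ u in Ioc 0 L, ∑' m : ℤ, ENNReal.ofReal (psi (c * Real.exp (u + m * L))) := by
          refine (lintegral_tsum fun m => ?_).symm
          exact ((continuous_psi.comp (by continuity)).measurable.ennreal_ofReal).aemeasurable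
    _ = ∫⁻ u in Ioc 0 L, ENNReal.ofReal v := by
          refine lintegral_congr fun u => ?_
          rw [← ENNReal.ofReal_tsum_of_nonneg (fun m => psi_nonneg (by positivity)) (hsum_v u),
            (hG' u).tsum_eq]
    _ = ENNReal.ofReal v * volume (Ioc 0 L) := setLIntegral_const _ _
    _ ≠ ⊤ := ENNReal.mul_ne_top ENNReal.ofReal_ne_top
          (by rw [Real.volume_Ioc]; exact ENNReal.ofReal_ne_top)
  have hswap := MeasureTheory.integral_tsum (μ := volume.restrict (Ioc 0 L)) hmeas_fm hlint
  have htsum_fm : ∀ u : ℝ, (∑' m : ℤ, fm m u) = (v:ℂ) * Complex.exp ((-(θ*u) : ℝ) * Complex.I) := by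
    intro u
    simp only [hfm]
    rw [tsum_mul_right]
    rw [(Complex.hasSum_ofReal.mpr (hG' u)).tsum_eq]
  have hcne : (-(θ:ℂ)*Complex.I) ≠ 0 := by
    apply mul_ne_zero _ Complex.I_ne_zero
    simpa using Complex.ofReal_ne_zero.mpr hθ.ne'
  have hzero : (∫ u in Ioc 0 L, (v:ℂ) * Complex.exp ((-(θ*u) : ℝ) * Complex.I)) = 0 := by
    rw [← intervalIntegral.integral_of_le hL.le]
    have e3 : ∀ u : ℝ, (v:ℂ) * Complex.exp ((-(θ*u) : ℝ) * Complex.I)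
        = (v:ℂ) * Complex.exp ((-(θ:ℂ)*Complex.I) * (u:ℝ)) := by
      intro u; congr 2; push_cast; ring
    rw [intervalIntegral.integral_congr
      (g := fun u : ℝ => (v:ℂ) * Complex.exp ((-(θ:ℂ)*Complex.I) * (u:ℝ))) (fun u _ => e3 u)]
    rw [intervalIntegral.integral_const_mul, integral_exp_mul_complex hcne]
    have e1 : (-(θ:ℂ)*Complex.I) * ((L:ℝ):ℂ) = ((-1 : ℤ):ℂ) * (2*(π:ℝ)*Complex.I) := by
      have h' : ((θ:ℝ):ℂ) * ((L:ℝ):ℂ) = ((2*π:ℝ):ℂ) := by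
        rw [← Complex.ofReal_mul, hθL]
      push_cast
      push_cast at h'
      linear_combination (-Complex.I) * h'
    rw [e1, Complex.exp_int_mul_two_pi_mul_I, Complex.ofReal_zero, mul_zero, Complex.exp_zero]
    simp
  calc (∫ u : ℝ, h u) = ∑' m : ℤ, ∫ u in s m, h u := hsplit
  _ = ∑' m : ℤ, ∫ u in Ioc 0 L, fm m u := tsum_congr htrans
  _ = ∫ u in Ioc 0 L, ∑' m : ℤ, fm m u := hswap.symm
  _ = ∫ u in Ioc 0 L, (v:ℂ) * Complex.exp ((-(θ*u) : ℝ) * Complex.I) := by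
      exact integral_congr_ae (Eventually.of_forall fun u => htsum_fm u)
  _ = 0 := hzero

open MeasureTheory in
set_option maxHeartbeats 1000000 in
lemma lemMσ {w : ℂ} (hw : w.re = 0) {σ : ℝ} (hσ : 0 < σ) :
    ∫ x in Set.Ioi (0:ℝ), (psi x : ℂ) * (x:ℂ) ^ ((σ:ℂ) + w - 1)
      = Complex.Gamma ((σ:ℂ) + w) * (1 - (1/2:ℂ) ^ ((σ:ℂ) + w)) := by
  set a : ℂ := (σ:ℂ) + w with hadef
  have ha : 0 < a.re := by simp [hadef, hw, hσ]
  have h1 : IntegrableOn (fun x : ℝ => (x:ℂ)^(a-1) * Complex.exp (-(((1:ℝ):ℂ) * (x:ℂ))))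
      (Set.Ioi 0) := expInt ha le_rfl
  have h2 : IntegrableOn (fun x : ℝ => (x:ℂ)^(a-1) * Complex.exp (-(((2:ℝ):ℂ) * (x:ℂ))))
      (Set.Ioi 0) := expInt ha one_le_two
  have hsplit : ∀ x ∈ Set.Ioi (0:ℝ), (psi x : ℂ) * (x:ℂ)^(a - 1)
      = (x:ℂ)^(a-1) * Complex.exp (-(((1:ℝ):ℂ) * (x:ℂ)))
        - (x:ℂ)^(a-1) * Complex.exp (-(((2:ℝ):ℂ) * (x:ℂ))) := by
    intro x hx
    simp only [psi]
    push_cast [Complex.ofReal_exp]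
    ring
  rw [setIntegral_congr_fun measurableSet_Ioi hsplit, integral_sub h1 h2,
    Complex.integral_cpow_mul_exp_neg_mul_Ioi ha one_pos,
    Complex.integral_cpow_mul_exp_neg_mul_Ioi ha two_pos]
  norm_num
  ring

open MeasureTheory in
set_option maxHeartbeats 1000000 in
lemma lemDCT {w : ℂ} (hw : w.re = 0) (hwne : ∀ m : ℕ, w ≠ -(m:ℂ)) :
    ∫ x in Set.Ioi (0:ℝ), (psi x : ℂ) * (x:ℂ) ^ (w - 1)
      = Complex.Gamma w * (1 - (1/2:ℂ) ^ w) := by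
  set σ : ℕ → ℝ := fun n => 1/((n:ℝ)+1) with hσdef
  have hσpos : ∀ n, 0 < σ n := fun n => by positivity
  have hσle : ∀ n, σ n ≤ 1 := fun n => by
    rw [hσdef]
    rw [div_le_one (by positivity)]
    simp
  have hσ0 : Filter.Tendsto σ Filter.atTop (nhds 0) := tendsto_one_div_add_atTop_nhds_zero_nat
  -- dominated convergence
  have hmeas : ∀ n : ℕ, AEStronglyMeasurable (fun x : ℝ => (psi x : ℂ) * (x:ℂ) ^ (((σ n:ℝ):ℂ) + w - 1))
      ((volume : Measure ℝ).restrict (Set.Ioi 0)) := by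
    intro n
    refine ContinuousOn.aestronglyMeasurable ?_ measurableSet_Ioi
    refine ContinuousOn.mul (Complex.continuous_ofReal.comp continuous_psi).continuousOn ?_
    intro x hx
    exact ((continuousAt_cpow_const (Complex.ofReal_mem_slitPlane.2 hx)).comp
      Complex.continuous_ofReal.continuousAt).continuousWithinAt
  have hbint : Integrable (fun x : ℝ => 2 * Real.exp (-x))
      ((volume : Measure ℝ).restrict (Set.Ioi 0)) := by
    have := (exp_neg_integrableOn_Ioi 0 (zero_lt_one)).const_mul 2
    refine this.congr ?_
    refine Filter.Eventually.of_forall fun x => ?_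
    norm_num
  have hbound : ∀ n : ℕ, ∀ᵐ x ∂((volume : Measure ℝ).restrict (Set.Ioi 0)),
      ‖(psi x : ℂ) * (x:ℂ) ^ (((σ n:ℝ):ℂ) + w - 1)‖ ≤ 2 * Real.exp (-x) := by
    intro n
    rw [ae_restrict_iff' measurableSet_Ioi]
    refine Filter.Eventually.of_forall fun x hx => ?_
    rw [Set.mem_Ioi] at hx
    have hre : (((σ n:ℝ):ℂ) + w - 1).re = σ n - 1 := by simp [hw]
    rw [norm_mul, Complex.norm_real, Real.norm_eq_abs,
      Complex.norm_cpow_eq_rpow_re_of_pos hx, hre,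
      abs_of_nonneg (psi_nonneg hx.le)]
    exact psi_rpow_bound hx (hσpos n).le (hσle n)
  have hlim : ∀ᵐ x ∂((volume : Measure ℝ).restrict (Set.Ioi 0)),
      Filter.Tendsto (fun n : ℕ => (psi x : ℂ) * (x:ℂ) ^ (((σ n:ℝ):ℂ) + w - 1)) Filter.atTop
        (nhds ((psi x : ℂ) * (x:ℂ) ^ (w - 1))) := by
    rw [ae_restrict_iff' measurableSet_Ioi]
    refine Filter.Eventually.of_forall fun x hx => ?_
    rw [Set.mem_Ioi] at hx
    have hxne : (x:ℂ) ≠ 0 := Complex.ofReal_ne_zero.mpr hx.ne'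
    have hexp : Filter.Tendsto (fun n : ℕ => ((σ n:ℝ):ℂ) + w - 1) Filter.atTop (nhds (w - 1)) := by
      have h1 : Filter.Tendsto (fun n : ℕ => ((σ n:ℝ):ℂ)) Filter.atTop (nhds 0) := by
        have := (Complex.continuous_ofReal.tendsto 0).comp hσ0
        simpa [Function.comp_def] using this
      have h2 := (h1.add_const w).sub_const 1
      simpa using h2
    exact Filter.Tendsto.const_mul _ ((continuousAt_const_cpow hxne).tendsto.comp hexp)
  have hDCT := tendsto_integral_of_dominated_convergence _ hmeas hbint hbound hlim
  have hval : ∀ n : ℕ, (∫ x in Set.Ioi (0:ℝ), (psi x : ℂ) * (x:ℂ) ^ (((σ n:ℝ):ℂ) + w - 1))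
      = Complex.Gamma (((σ n:ℝ):ℂ) + w) * (1 - (1/2:ℂ) ^ (((σ n:ℝ):ℂ) + w)) :=
    fun n => lemMσ hw (hσpos n)
  have hsn : Filter.Tendsto (fun n : ℕ => ((σ n:ℝ):ℂ) + w) Filter.atTop (nhds w) := by
    have h1 : Filter.Tendsto (fun n : ℕ => ((σ n:ℝ):ℂ)) Filter.atTop (nhds 0) := by
      have := (Complex.continuous_ofReal.tendsto 0).comp hσ0
      simpa [Function.comp_def] using this
    simpa using h1.add_const w
  have hRHS : Filter.Tendsto
      (fun n : ℕ => Complex.Gamma (((σ n:ℝ):ℂ) + w) * (1 - (1/2:ℂ) ^ (((σ n:ℝ):ℂ) + w)))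
      Filter.atTop (nhds (Complex.Gamma w * (1 - (1/2:ℂ) ^ w))) := by
    refine Filter.Tendsto.mul ?_ ?_
    · exact ((Complex.differentiableAt_Gamma w hwne).continuousAt.tendsto).comp hsn
    · refine Filter.Tendsto.const_sub _ ?_
      exact ((continuousAt_const_cpow (by norm_num : (1/2:ℂ) ≠ 0)).tendsto).comp hsn
  exact tendsto_nhds_unique ((Filter.Tendsto.congr hval) hDCT) hRHS

open MeasureTheory in
set_option maxHeartbeats 1000000 in
lemma lemC (c L v : ℝ) (hc : 0 < c) (hL : 0 < L)
    (h0 : ∫ u : ℝ, (psi (c * Real.exp u) : ℂ) * Complex.exp ((-(2*π/L*u) : ℝ) * Complex.I) = 0) :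
    ∃ n : ℤ, 0 < n ∧ Real.log 2 = n * L := by
  set θ : ℝ := 2*π/L with hθdef
  have hθ : 0 < θ := by positivity
  set w : ℂ := -(θ:ℂ) * Complex.I with hwdef
  have hwre : w.re = 0 := by simp [hwdef]
  have hwim : w.im = -θ := by simp [hwdef]
  have hwne : ∀ m : ℕ, w ≠ -(m:ℂ) := by
    intro m heq
    have := congrArg Complex.im heq
    rw [hwim] at this
    simp at this
    exact hθ.ne' (by linarith)
  set E : ℂ := Complex.exp (((θ * Real.log c : ℝ) : ℂ) * Complex.I) with hE
  set g : ℝ → ℂ := fun x => ((psi x / x : ℝ) : ℂ) * ((x:ℂ) ^ w) * E with hg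
  have himg : (fun u : ℝ => c * Real.exp u) '' Set.univ = Set.Ioi 0 := by
    rw [Set.image_univ]
    ext x
    simp only [Set.mem_range, Set.mem_Ioi]
    constructor
    · rintro ⟨u, rfl⟩; positivity
    · intro hx
      refine ⟨Real.log (x / c), ?_⟩
      rw [Real.exp_log (by positivity)]
      field_simp
  have hderiv : ∀ u ∈ (Set.univ : Set ℝ),
      HasDerivWithinAt (fun u : ℝ => c * Real.exp u) (c * Real.exp u) Set.univ u :=
    fun u _ => ((Real.hasDerivAt_exp u).const_mul c).hasDerivWithinAt
  have hinj : Set.InjOn (fun u : ℝ => c * Real.exp u) Set.univ := by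
    intro a _ b _ hab
    have := mul_left_cancel₀ hc.ne' hab
    exact Real.exp_injective this
  have hcov := integral_image_eq_integral_abs_deriv_smul MeasurableSet.univ hderiv hinj g
  rw [himg, setIntegral_univ] at hcov
  have hkey : ∀ u : ℝ, |c * Real.exp u| • g (c * Real.exp u)
      = (psi (c * Real.exp u) : ℂ) * Complex.exp ((-(θ*u) : ℝ) * Complex.I) := by
    intro u
    set x : ℝ := c * Real.exp u with hx
    have hx0 : 0 < x := by positivity
    have hxC : (x:ℂ) ≠ 0 := Complex.ofReal_ne_zero.mpr hx0.ne'
    have hlogx : Real.log x = Real.log c + u := by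
      rw [hx, Real.log_mul hc.ne' (Real.exp_ne_zero u), Real.log_exp]
    rw [abs_of_pos hx0]
    show (x:ℝ) • (((psi x / x : ℝ):ℂ) * (x:ℂ)^w * E) = _
    rw [Complex.real_smul]
    have hxw : (x:ℂ)^w = Complex.exp (((Real.log x : ℝ):ℂ) * w) := by
      rw [Complex.cpow_def_of_ne_zero hxC, Complex.ofReal_log hx0.le]
    rw [hxw, hE]
    have hxpsi : ((x:ℝ):ℂ) * ((psi x / x : ℝ):ℂ) = (psi x : ℂ) := by
      push_cast
      field_simp
    calc ((x:ℝ):ℂ) * (((psi x / x : ℝ):ℂ) * Complex.exp (((Real.log x : ℝ):ℂ) * w)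
            * Complex.exp (((θ * Real.log c : ℝ) : ℂ) * Complex.I))
        = (((x:ℝ):ℂ) * ((psi x / x : ℝ):ℂ)) * (Complex.exp (((Real.log x : ℝ):ℂ) * w)
            * Complex.exp (((θ * Real.log c : ℝ) : ℂ) * Complex.I)) := by ring
    _ = (psi x : ℂ) * Complex.exp ((-(θ*u) : ℝ) * Complex.I) := by
        rw [hxpsi, ← Complex.exp_add]
        congr 2
        rw [hlogx, hwdef]
        push_cast
        ring
  have hgh : (∫ x in Set.Ioi (0:ℝ), g x) = 0 := by
    rw [hcov]
    rw [show (fun u : ℝ => |c * Real.exp u| • g (c * Real.exp u))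
        = fun u : ℝ => (psi (c * Real.exp u) : ℂ) * Complex.exp ((-(θ*u) : ℝ) * Complex.I)
        from funext hkey]
    exact h0
  have hgE : ∀ x ∈ Set.Ioi (0:ℝ), g x = E * ((psi x:ℂ) * (x:ℂ)^(w-1)) := by
    intro x hx
    rw [Set.mem_Ioi] at hx
    have hxne : (x:ℂ) ≠ 0 := Complex.ofReal_ne_zero.mpr hx.ne'
    rw [hg]
    show ((psi x / x : ℝ) : ℂ) * ((x:ℂ) ^ w) * E = _
    rw [Complex.cpow_sub _ _ hxne, Complex.cpow_one]
    push_cast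
    ring
  have hM0 : (∫ x in Set.Ioi (0:ℝ), (psi x:ℂ) * (x:ℂ)^(w-1)) = 0 := by
    have h1 : (∫ x in Set.Ioi (0:ℝ), g x)
        = E * ∫ x in Set.Ioi (0:ℝ), (psi x:ℂ) * (x:ℂ)^(w-1) := by
      rw [setIntegral_congr_fun measurableSet_Ioi hgE, integral_const_mul]
    rw [hgh] at h1
    have hE0 : E ≠ 0 := Complex.exp_ne_zero _
    exact (mul_eq_zero.mp h1.symm).resolve_left hE0
  rw [lemDCT hwre hwne] at hM0
  have hΓ : Complex.Gamma w ≠ 0 := Complex.Gamma_ne_zero hwne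
  have hone : (1/2:ℂ) ^ w = 1 := by
    have := (mul_eq_zero.mp hM0).resolve_left hΓ
    have := sub_eq_zero.mp this
    exact this.symm
  have hcpow : (1/2:ℂ) ^ w = Complex.exp (Complex.log (1/2:ℂ) * w) :=
    Complex.cpow_def_of_ne_zero (by norm_num) w
  have hlog12 : Complex.log (1/2:ℂ) = ((-Real.log 2 : ℝ) : ℂ) := by
    rw [show (1/2:ℂ) = (((1/2:ℝ)):ℂ) by norm_num, ← Complex.ofReal_log (by norm_num)]
    congr 1
    rw [one_div, Real.log_inv]
  rw [hcpow, hlog12, Complex.exp_eq_one_iff] at hone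
  obtain ⟨n, hn⟩ := hone
  have him := congrArg Complex.im hn
  rw [hwdef] at him
  push_cast at him
  simp [Complex.mul_im, Complex.mul_re] at him
  have hre2 : (Complex.log 2).re = Real.log 2 := by
    rw [show (2:ℂ) = ((2:ℝ):ℂ) by norm_num, Complex.log_ofReal_re]
  rw [hre2] at him
  have hrel : Real.log 2 * θ = n * (2 * π) := by linarith [him]
  refine ⟨n, ?_, ?_⟩
  · by_contra hn0
    push_neg at hn0
    have hn0' : (n:ℝ) ≤ 0 := by exact_mod_cast hn0
    have hl2 : 0 < Real.log 2 := Real.log_pos one_lt_two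
    nlinarith [Real.pi_pos]
  · have hπ : (0:ℝ) < 2*π := by positivity
    rw [hθdef] at hrel
    field_simp at hrel
    nlinarith [hrel, Real.pi_pos]


set_option maxHeartbeats 1000000 in
lemma part1 (c q : ℝ) (hc : 0 < c) (hq0 : 0 < q) (hq1 : q < 1)
    (p : ℕ → ℝ) (hp : ∀ j : ℕ, p j = c * q ^ (j + 1))
    (V : ℝ → ℝ) (hV : ∀ t : ℝ, V t = ∑' j : ℕ, psi (t * p j))
    (v : ℝ) (hv : Tendsto V atTop (nhds v)) :
    ∃ k : ℕ, 0 < k ∧ q = (2:ℝ) ^ (-(1:ℝ)/(k:ℝ)) := by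
  set L : ℝ := -Real.log q with hLdef
  have hL : 0 < L := by
    have := Real.log_neg hq0 hq1
    simp only [hLdef]
    linarith
  have hqe : q = Real.exp (-L) := by
    rw [hLdef, neg_neg, Real.exp_log hq0]
  have hp' : ∀ j : ℕ, p j = c * (Real.exp (-L)) ^ (j+1) := by
    intro j; rw [hp, hqe]
  have hG := lemA c L hc hL p hp' V hV v hv
  have h0 := lemB c L v hc hL hG
  obtain ⟨n, hn0, hnL⟩ := lemC c L v hc hL h0
  refine ⟨n.toNat, by omega, ?_⟩
  have hnn : ((n.toNat : ℕ) : ℝ) = (n : ℝ) := by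
    exact_mod_cast congrArg (fun z : ℤ => (z : ℝ)) (Int.toNat_of_nonneg hn0.le)
  rw [Real.rpow_def_of_pos two_pos, hqe]
  congr 1
  rw [hnn, hnL]
  have hnR : (n:ℝ) ≠ 0 := by exact_mod_cast hn0.ne'
  field_simp

theorem stmt15 (c q : ℝ) (hc : 0 < c) (hq0 : 0 < q) (hq1 : q < 1)
    (p : ℕ → ℝ) (hp : ∀ j : ℕ, p j = c * q ^ (j + 1))
    (V : ℝ → ℝ)
    (hV : ∀ t : ℝ, V t = ∑' j : ℕ, (Real.exp (-(t * p j)) - Real.exp (-(2 * t * p j)))) :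
    ((∃ v : ℝ, Tendsto V atTop (nhds v)) ↔
      ∃ k : ℕ, 0 < k ∧ q = (2 : ℝ) ^ (-(1 : ℝ) / (k : ℝ))) ∧
    (∀ k : ℕ, 0 < k → q = (2 : ℝ) ^ (-(1 : ℝ) / (k : ℝ)) →
      Tendsto V atTop (nhds (k : ℝ))) := by
  have hV' : ∀ t : ℝ, V t = ∑' j : ℕ, psi (t * p j) := by
    intro t
    rw [hV]
    congr 1
    funext j
    simp only [psi]
    ring_nf
  constructor
  · constructor
    · rintro ⟨v, hv⟩
      exact part1 c q hc hq0 hq1 p hp V hV' v hv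
    · rintro ⟨k, hk, hqk⟩
      exact ⟨k, part2 c q hc hq0 hq1 p hp V hV' k hk hqk⟩
  · intro k hk hqk
    exact part2 c q hc hq0 hq1 p hp V hV' k hk hqk
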